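/- arXiv:1812.10831 — 7 statements merged into one kernel-verified Lean document; each statement's English description precedes it below -/
import Mathlib

section
/- For every natural number k there exists a unique polynomial P over ℚ such that P evaluated at n equals ∑_{i=1}^{n} i^k for every natural number n; moreover this polynomial has degree k + 1 and its constant coefficient is 0. -/
open Finset Polynomial

lemma bern_degree (n : ℕ) : (Polynomial.bernoulli n).degree = n := by
  have hle : (Polynomial.bernoulli n).degree ≤ n := by
    rw [Polynomial.bernoulli]
    refine (Polynomial.degree_sum_le _ _).trans ?_
    apply Finset.sup_le
    intro i hi
    refine (Polynomial.degree_monomial_le _ _).trans ?_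
    exact_mod_cast Nat.cast_le.mpr (Nat.sub_le _ _)
  have hc : (Polynomial.bernoulli n).coeff n = 1 := by
    rw [Polynomial.bernoulli, Polynomial.finset_sum_coeff]
    rw [Finset.sum_eq_single 0]
    · simp
    · intro i hi hi0
      rw [Polynomial.coeff_monomial, if_neg]
      simp only [Finset.mem_range] at hi
      omega
    · simp
  exact le_antisymm hle (Polynomial.le_degree_of_ne_zero (by rw [hc]; norm_num))

lemma bern_coeff (n : ℕ) : (Polynomial.bernoulli n).coeff n = 1 := by
  rw [Polynomial.bernoulli, Polynomial.finset_sum_coeff]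
  rw [Finset.sum_eq_single 0]
  · simp
  · intro i hi hi0
    rw [Polynomial.coeff_monomial, if_neg]
    simp only [Finset.mem_range] at hi
    omega
  · simp

lemma uniq_poly (f : ℕ → ℚ) (P Q : ℚ[X]) (hP : ∀ n : ℕ, P.eval (n : ℚ) = f n)
    (hQ : ∀ n : ℕ, Q.eval (n : ℚ) = f n) : P = Q := by
  have : P - Q = 0 := by
    apply Polynomial.eq_zero_of_infinite_isRoot
    apply Set.Infinite.mono (s := Set.range (Nat.cast : ℕ → ℚ))
    · rintro x ⟨n, rfl⟩
      simp [Polynomial.IsRoot, hP n, hQ n]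
    · exact Set.infinite_range_of_injective Nat.cast_injective
  linear_combination (norm := ring_nf) this

theorem stmt_2 (k : ℕ) :
    (∃! P : ℚ[X], ∀ n : ℕ, P.eval (n : ℚ) = ∑ i ∈ Icc 1 n, (i : ℚ) ^ k) ∧
      ∀ P : ℚ[X], (∀ n : ℕ, P.eval (n : ℚ) = ∑ i ∈ Icc 1 n, (i : ℚ) ^ k) →
        P.degree = (k + 1 : ℕ) ∧ P.coeff 0 = 0 := by
  have hk1 : ((k : ℚ) + 1) ≠ 0 := by positivity
  set Q : ℚ[X] := C ((k + 1 : ℚ))⁻¹ *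
      ((Polynomial.bernoulli (k + 1)).comp (X + 1) - C (_root_.bernoulli (k + 1)))
      - C ((0 : ℚ) ^ k) with hQdef
  have hQ : ∀ n : ℕ, Q.eval (n : ℚ) = ∑ i ∈ Icc 1 n, (i : ℚ) ^ k := by
    intro n
    have hb := Polynomial.bernoulli_succ_eval (n + 1) k
    have hsplit : ∑ i ∈ range (n + 1), (i : ℚ) ^ k
        = (0 : ℚ) ^ k + ∑ i ∈ Icc 1 n, (i : ℚ) ^ k := by
      have : range (n + 1) = insert 0 (Icc 1 n) := by
        ext x; simp; omega
      rw [this, Finset.sum_insert (by simp)]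
      simp
    rw [hQdef]
    simp only [eval_sub, eval_mul, eval_C, eval_comp, eval_add, eval_X, eval_one]
    have hcast : ((n : ℚ) + 1) = ((n + 1 : ℕ) : ℚ) := by push_cast; ring
    rw [hcast, hb, hsplit]
    field_simp
    ring
  have huniq : ∀ P : ℚ[X], (∀ n : ℕ, P.eval (n : ℚ) = ∑ i ∈ Icc 1 n, (i : ℚ) ^ k) → P = Q :=
    fun P hP => uniq_poly _ P Q hP hQ
  have hQdeg : Q.degree = (k + 1 : ℕ) := by
    have hmon : (Polynomial.bernoulli (k + 1) : ℚ[X]).Monic := by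
      unfold Polynomial.Monic Polynomial.leadingCoeff
      rw [Polynomial.natDegree_eq_of_degree_eq_some (bern_degree (k + 1)), bern_coeff]
    have hX1 : (X + 1 : ℚ[X]) = X + C 1 := by simp
    have hcm : ((Polynomial.bernoulli (k + 1)).comp (X + 1) : ℚ[X]).Monic := by
      rw [hX1]; exact hmon.comp_X_add_C 1
    have h1 : ((Polynomial.bernoulli (k + 1)).comp (X + 1) : ℚ[X]).degree = (k + 1 : ℕ) := by
      rw [Polynomial.degree_eq_natDegree hcm.ne_zero, Polynomial.natDegree_comp,
        Polynomial.natDegree_eq_of_degree_eq_some (bern_degree (k + 1)), hX1,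
        Polynomial.natDegree_X_add_C, mul_one]
    have hpos : (0 : WithBot ℕ) < (k + 1 : ℕ) := by
      exact_mod_cast Nat.cast_pos.mpr (Nat.succ_pos k)
    have h2 : ((Polynomial.bernoulli (k + 1)).comp (X + 1)
        - C (_root_.bernoulli (k + 1)) : ℚ[X]).degree = (k + 1 : ℕ) := by
      rw [Polynomial.degree_sub_eq_left_of_degree_lt, h1]
      rw [h1]
      exact lt_of_le_of_lt Polynomial.degree_C_le hpos
    have h3 : (C ((k + 1 : ℚ))⁻¹ * ((Polynomial.bernoulli (k + 1)).comp (X + 1)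
        - C (_root_.bernoulli (k + 1)))).degree = (k + 1 : ℕ) := by
      rw [Polynomial.degree_C_mul (by simpa using hk1), h2]
    rw [hQdef, Polynomial.degree_sub_eq_left_of_degree_lt, h3]
    rw [h3]
    exact lt_of_le_of_lt Polynomial.degree_C_le hpos
  refine ⟨⟨Q, hQ, huniq⟩, ?_⟩
  intro P hP
  have hPQ := huniq P hP
  subst hPQ
  refine ⟨hQdeg, ?_⟩
  rw [Polynomial.coeff_zero_eq_eval_zero]
  have := hQ 0
  simpa using this
end

section
/- For every natural number k, if P ∈ ℚ[X] satisfies P.eval n = ∑_{i=1}^{n} i^k for all n ∈ ℕ, then the coefficient of X^{k+1} in P equals 1/(k+1). -/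
open Finset Polynomial

theorem stmt_3 (k : ℕ) (P : ℚ[X])
    (hP : ∀ n : ℕ, P.eval (n : ℚ) = ∑ i ∈ Icc 1 n, (i : ℚ) ^ k) :
    P.coeff (k + 1) = 1 / (k + 1) := by
  set Q : ℚ[X] := ∑ i ∈ range (k + 1),
      C (bernoulli' i * (k + 1).choose i / (k + 1)) * X ^ (k + 1 - i) with hQ
  have hQeval : ∀ n : ℕ, Q.eval (n : ℚ) = ∑ i ∈ Icc 1 n, (i : ℚ) ^ k := by
    intro n
    have := sum_Ico_pow n k
    rw [hQ]
    simp only [eval_finset_sum, eval_mul, eval_C, eval_pow, eval_X]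
    rw [show Icc 1 n = Ico 1 (n + 1) by rfl, this]
    exact sum_congr rfl fun i _ => by ring
  have hPQ : P = Q := by
    have hroots : {x : ℚ | (P - Q).IsRoot x}.Infinite := by
      refine Set.infinite_of_injective_forall_mem (f := fun n : ℕ => (n : ℚ)) ?_ ?_
      · exact fun a b h => Nat.cast_injective h
      · intro n
        simp [IsRoot, eval_sub, hP n, hQeval n]
    exact sub_eq_zero.mp (eq_zero_of_infinite_isRoot _ hroots)
  rw [hPQ, hQ, finset_sum_coeff]
  rw [Finset.sum_eq_single 0]
  · simp
  · intro i hi hne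
    simp only [mem_range] at hi
    rw [coeff_C_mul, coeff_X_pow, if_neg (by omega), mul_zero]
  · intro h
    simp at h
end

section
/- For every natural number m ≥ 1, if P ∈ ℚ[X] satisfies P.eval n = ∑_{i=1}^{n} i^m for all n ∈ ℕ, then the coefficient of X^1 in P equals B'_m, the m-th Bernoulli number with the convention B'_1 = +1/2. -/
open Finset Polynomial

theorem stmt_4 (m : ℕ) (hm : 1 ≤ m) (P : ℚ[X])
    (hP : ∀ n : ℕ, P.eval (n : ℚ) = ∑ i ∈ Icc 1 n, (i : ℚ) ^ m) :
    P.coeff 1 = bernoulli' m := by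
  set Q : ℚ[X] := ∑ i ∈ range (m + 1),
      C (bernoulli' i * ((m + 1).choose i) / (m + 1)) * X ^ (m + 1 - i) with hQ
  have hQeval : ∀ n : ℕ, Q.eval (n : ℚ) = ∑ i ∈ Icc 1 n, (i : ℚ) ^ m := by
    intro n
    have := sum_Ico_pow n m
    rw [hQ]
    simp only [eval_finset_sum, eval_mul, eval_C, eval_pow, eval_X]
    rw [← Finset.Ico_add_one_right_eq_Icc, this]
    apply Finset.sum_congr rfl
    intro i _
    ring
  have hPQ : P = Q := by
    apply Polynomial.eq_of_infinite_eval_eq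
    apply Set.Infinite.mono (s := Set.range ((↑) : ℕ → ℚ))
    · rintro x ⟨n, rfl⟩
      simp [hP n, hQeval n]
    · exact Set.infinite_range_of_injective Nat.cast_injective
  rw [hPQ, hQ]
  rw [Polynomial.finset_sum_coeff]
  rw [Finset.sum_eq_single m]
  · have h1 : m + 1 - m = 1 := by omega
    rw [h1, coeff_C_mul, coeff_X_pow, if_pos rfl, mul_one]
    have h2 : ((m : ℚ) + 1) ≠ 0 := by positivity
    rw [Nat.choose_succ_self_right]
    push_cast
    field_simp
  · intro i hi hne
    rw [coeff_C_mul, coeff_X_pow]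
    have : m + 1 - i ≠ 1 := by omega
    simp [Ne.symm this]
  · intro h
    exact absurd (Finset.self_mem_range_succ m) h
end

section
/- Define d : ℕ → ℚ by d k = (k+1) · B'_k, where B'_k is the k-th Bernoulli number with the convention B'_1 = +1/2; define β : ℕ → ℚ by β x = ∑_{j=0}^{x+1} (−1)^{x+1−j} · d j / ((j+1)! · (x+1−j)!), and define β* : ℕ → ℚ by β* x = β x − d (x+1) / (x+2)!. Then for every natural number x, d satisfies the non-linear recursion d (x+1) = −(x+1)! · ( ∑_{k=0}^{x−1} d (x−k) · β k / (x+1−k)! + β* x ), where the sum over k is empty when x = 0. -/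
open Finset

noncomputable def d (k : ℕ) : ℚ := (k + 1) * bernoulli' k

noncomputable def β (x : ℕ) : ℚ :=
  ∑ j ∈ range (x + 2),
    (-1 : ℚ) ^ (x + 1 - j) * d j / (((j + 1).factorial : ℚ) * ((x + 1 - j).factorial : ℚ))

noncomputable def βstar (x : ℕ) : ℚ := β x - d (x + 1) / ((x + 2).factorial : ℚ)

section Aux

open PowerSeries

lemma dExp : d⁄dX ℚ (exp ℚ) = exp ℚ := by
  ext n
  simp [coeff_derivative, coeff_exp, Nat.factorial_succ]
  field_simp

lemma exp_sub_one_ne : (exp ℚ - 1) ≠ 0 := by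
  intro h
  have := congrArg (coeff 1) h
  simp [coeff_exp] at this

lemma key_ps : bernoulliPowerSeries ℚ * bernoulli'PowerSeries ℚ =
    bernoulli'PowerSeries ℚ - X * d⁄dX ℚ (bernoulli'PowerSeries ℚ) := by
  set P := bernoulliPowerSeries ℚ
  set Q := bernoulli'PowerSeries ℚ
  set E := exp ℚ
  have hP : P * (E - 1) = X := bernoulliPowerSeries_mul_exp_sub_one ℚ
  have hQ : Q * (E - 1) = X * E := bernoulli'PowerSeries_mul_exp_sub_one ℚ
  have hQ' : d⁄dX ℚ Q * (E - 1) + Q * E = E + X * E := by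
    have := congrArg (d⁄dX ℚ) hQ
    have hdE : d⁄dX ℚ E = E := dExp
    simp only [Derivation.leibniz, smul_eq_mul, derivative_X, map_sub,
      Derivation.map_one_eq_zero, sub_zero, hdE] at this
    linear_combination this
  have hcancel : ∀ a b : ℚ⟦X⟧, a * ((E-1)*(E-1)) = b * ((E-1)*(E-1)) → a = b := by
    intro a b h
    exact mul_right_cancel₀ (mul_ne_zero exp_sub_one_ne exp_sub_one_ne) h
  apply hcancel
  linear_combination (Q*(E-1))*hP + (X - E + 1 - X*E)*hQ + X*(E-1)*hQ'

lemma conv (n : ℕ) :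
    ∑ k ∈ range (n + 1), (n.choose k : ℚ) * bernoulli k * bernoulli' (n - k)
      = (1 - n) * bernoulli' n := by
  have h := congrArg (coeff n) key_ps
  rw [map_sub, coeff_mul, Finset.Nat.sum_antidiagonal_eq_sum_range_succ_mk] at h
  have hX : coeff n (X * d⁄dX ℚ (bernoulli'PowerSeries ℚ))
      = (n : ℚ) * (bernoulli' n / n.factorial) := by
    cases n with
    | zero => simp
    | succ m =>
      rw [coeff_succ_X_mul, coeff_derivative]
      simp [bernoulli'PowerSeries, coeff_mk, Nat.factorial_succ]
      field_simp
  rw [hX] at h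
  simp only [bernoulliPowerSeries, bernoulli'PowerSeries, coeff_mk, eq_ratCast, Rat.cast_div,
    Rat.cast_natCast, Rat.cast_id, Algebra.algebraMap_self, RingHom.id_apply] at h
  have h2 : (n.factorial : ℚ) * ∑ k ∈ range (n + 1),
      bernoulli k / k.factorial * (bernoulli' (n - k) / (n - k).factorial)
      = (1 - n) * bernoulli' n := by
    rw [h]
    have : (n.factorial : ℚ) ≠ 0 := Nat.cast_ne_zero.mpr n.factorial_ne_zero
    field_simp
  rw [← h2, Finset.mul_sum]
  apply Finset.sum_congr rfl
  intro k hk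
  have hkn : k ≤ n := Nat.lt_succ_iff.mp (mem_range.mp hk)
  rw [Nat.cast_choose ℚ hkn]
  have h1 : (k.factorial : ℚ) ≠ 0 := Nat.cast_ne_zero.mpr k.factorial_ne_zero
  have h2 : ((n - k).factorial : ℚ) ≠ 0 := Nat.cast_ne_zero.mpr (n - k).factorial_ne_zero
  field_simp

end Aux

lemma beta_eq (x : ℕ) : β x = bernoulli (x + 1) / ((x + 1).factorial : ℚ) := by
  have hfac : ((x + 1).factorial : ℚ) ≠ 0 := Nat.cast_ne_zero.mpr (Nat.factorial_ne_zero _)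
  rw [eq_div_iff hfac, β, Finset.sum_mul]
  have hterm : ∀ j ∈ range (x + 2),
      (-1 : ℚ) ^ (x + 1 - j) * d j / (((j + 1).factorial : ℚ) * ((x + 1 - j).factorial : ℚ))
        * ((x + 1).factorial : ℚ)
      = (-1 : ℚ) ^ (x + 1) * ((x + 1).choose j : ℚ) * bernoulli j := by
    intro j hj
    have hj' : j ≤ x + 1 := Nat.lt_succ_iff.mp (mem_range.mp hj)
    have hsign : ((-1 : ℚ) ^ (x + 1 - j)) * (-1) ^ j = (-1) ^ (x + 1) := by
      rw [← pow_add, Nat.sub_add_cancel hj']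
    rw [Nat.cast_choose ℚ hj', d, bernoulli'_eq_bernoulli]
    have h1 : (j.factorial : ℚ) ≠ 0 := Nat.cast_ne_zero.mpr (Nat.factorial_ne_zero _)
    have h2 : (((x + 1 - j).factorial : ℕ) : ℚ) ≠ 0 := Nat.cast_ne_zero.mpr (Nat.factorial_ne_zero _)
    rw [Nat.factorial_succ j]
    push_cast
    field_simp
    linear_combination (bernoulli j) * hsign
  rw [Finset.sum_congr rfl hterm]
  simp only [← Finset.mul_sum, mul_assoc]
  rw [Finset.sum_range_succ, sum_bernoulli (x + 1)]
  cases x with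
  | zero => norm_num [bernoulli_one]
  | succ m =>
    have : m + 1 + 1 ≠ 1 := by omega
    simp only [if_neg this, zero_add, Nat.choose_self, Nat.cast_one, one_mul]
    rw [← bernoulli'_eq_bernoulli, bernoulli_eq_bernoulli'_of_ne_one (by omega)]

theorem stmt_13 (x : ℕ) :
    d (x + 1) = -((x + 1).factorial : ℚ) *
      ((∑ k ∈ range x, d (x - k) * β k / ((x + 1 - k).factorial : ℚ)) + βstar x) := by
  have hF : ((x + 1).factorial : ℚ) ≠ 0 := Nat.cast_ne_zero.mpr (Nat.factorial_ne_zero _)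
  have hconv := conv (x + 1)
  rw [Finset.sum_range_succ, Finset.sum_range_succ'] at hconv
  simp only [Nat.succ_sub_succ, Nat.sub_self, Nat.sub_zero, Nat.choose_self, Nat.choose_zero_right,
    bernoulli_zero, bernoulli'_zero, Nat.cast_one, one_mul, mul_one, Nat.cast_add] at hconv
  have hterm : ∀ k ∈ range x,
      ((x + 1).factorial : ℚ) * (d (x - k) * β k / ((x + 1 - k).factorial : ℚ))
        = ((x + 1).choose (k + 1) : ℚ) * bernoulli (k + 1) * bernoulli' (x - k) := by
    intro k hk
    have hk' : k < x := mem_range.mp hk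
    have h1 : x + 1 - k = (x - k) + 1 := by omega
    have h2 : x + 1 - (k + 1) = x - k := by omega
    rw [beta_eq, d, Nat.cast_choose ℚ (by omega : k + 1 ≤ x + 1), h1, h2,
      Nat.factorial_succ (x - k), Nat.factorial_succ k]
    have h3 : ((x - k).factorial : ℚ) ≠ 0 := Nat.cast_ne_zero.mpr (Nat.factorial_ne_zero _)
    have h4 : (k.factorial : ℚ) ≠ 0 := Nat.cast_ne_zero.mpr (Nat.factorial_ne_zero _)
    push_cast
    field_simp
  have hS : ((x + 1).factorial : ℚ) *
      (∑ k ∈ range x, d (x - k) * β k / ((x + 1 - k).factorial : ℚ))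
      = -(x : ℚ) * bernoulli' (x + 1) - bernoulli' (x + 1) - bernoulli (x + 1) := by
    rw [Finset.mul_sum, Finset.sum_congr rfl hterm]
    linear_combination hconv
  have hbs : ((x + 1).factorial : ℚ) * βstar x = bernoulli (x + 1) - bernoulli' (x + 1) := by
    rw [βstar, beta_eq, d, Nat.factorial_succ (x + 1)]
    push_cast
    field_simp
  have key : -((x + 1).factorial : ℚ) *
      ((∑ k ∈ range x, d (x - k) * β k / ((x + 1 - k).factorial : ℚ)) + βstar x)
      = -(-(x : ℚ) * bernoulli' (x + 1) - bernoulli' (x + 1) - bernoulli (x + 1))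
        - (bernoulli (x + 1) - bernoulli' (x + 1)) := by
    rw [← hS, ← hbs]; ring
  rw [key, d]
  push_cast
  ring
end

section
/- For natural numbers x and m with m ≥ x + 1, let P_m, P_{m−1} ∈ ℚ[X] be the polynomials satisfying P_m.eval n = ∑_{i=1}^{n} i^m and P_{m−1}.eval n = ∑_{i=1}^{n} i^{m−1} for all n ∈ ℕ, and let C_x = (x+2) · B'_{x+1} / (x+1)!, where B'_k is the k-th Bernoulli number with the convention B'_1 = +1/2. Then the coefficients satisfy the condensed recursion: coeff of X^{m−x} in P_m = (coeff of X^{m−1−x} in P_{m−1}) · m·(m−x−1) / ((m+1)·(m−x)) + C_x · m! / ((m+1)·(m−x)!). -/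
open Finset Polynomial

private noncomputable def faulQ (p : ℕ) : ℚ[X] :=
  ∑ i ∈ range (p + 1), C (bernoulli' i * ((p + 1).choose i) / (p + 1)) * X ^ (p + 1 - i)

private lemma faulQ_eval (p n : ℕ) :
    (faulQ p).eval (n : ℚ) = ∑ i ∈ Icc 1 n, (i : ℚ) ^ p := by
  have h := sum_Ico_pow n p
  rw [faulQ]
  simp only [eval_finset_sum, eval_mul, eval_C, eval_pow, eval_X]
  rw [← Finset.Ico_add_one_right_eq_Icc]
  rw [h]
  exact Finset.sum_congr rfl fun i _ => by ring

private lemma eq_faulQ (p : ℕ) (P : ℚ[X])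
    (hP : ∀ n : ℕ, P.eval (n : ℚ) = ∑ i ∈ Icc 1 n, (i : ℚ) ^ p) : P = faulQ p := by
  apply Polynomial.eq_of_infinite_eval_eq
  apply Set.Infinite.mono (s := Set.range (Nat.cast : ℕ → ℚ))
  · rintro _ ⟨n, rfl⟩
    simp only [Set.mem_setOf_eq, hP, faulQ_eval]
  · exact Set.infinite_range_of_injective Nat.cast_injective

private lemma faulQ_coeff (p i : ℕ) (hi : i ≤ p) :
    (faulQ p).coeff (p + 1 - i) = bernoulli' i * ((p + 1).choose i) / (p + 1) := by
  rw [faulQ, finset_sum_coeff]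
  rw [Finset.sum_eq_single i]
  · simp
  · intro j hj hne
    simp only [mem_range] at hj
    simp only [coeff_C_mul, coeff_X_pow]
    rw [if_neg (by omega), mul_zero]
  · intro h
    exact absurd (Finset.mem_range.mpr (by omega)) h

theorem stmt_14 (x m : ℕ) (hm : x + 1 ≤ m) (Pm Pm' : ℚ[X])
    (hPm : ∀ n : ℕ, Pm.eval (n : ℚ) = ∑ i ∈ Icc 1 n, (i : ℚ) ^ m)
    (hPm' : ∀ n : ℕ, Pm'.eval (n : ℚ) = ∑ i ∈ Icc 1 n, (i : ℚ) ^ (m - 1)) :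
    Pm.coeff (m - x) =
      Pm'.coeff (m - 1 - x) * ((m : ℚ) * ((m : ℚ) - (x : ℚ) - 1)) /
        (((m : ℚ) + 1) * ((m : ℚ) - (x : ℚ))) +
      ((x + 2 : ℚ) * bernoulli' (x + 1) / ((x + 1).factorial : ℚ)) * (m.factorial : ℚ) /
        (((m : ℚ) + 1) * ((m - x).factorial : ℚ)) := by
  have hPmQ : Pm = faulQ m := eq_faulQ m Pm hPm
  have hPm'Q : Pm' = faulQ (m - 1) := eq_faulQ (m - 1) Pm' hPm'
  have hcm : Pm.coeff (m - x) = bernoulli' (x + 1) * ((m + 1).choose (x + 1)) / (m + 1) := by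
    rw [hPmQ]
    have : m - x = m + 1 - (x + 1) := by omega
    rw [this, faulQ_coeff m (x + 1) hm]
  rcases eq_or_lt_of_le hm with heq | hlt
  · -- x + 1 = m
    have hx1 : m = x + 1 := heq.symm
    subst hx1
    have h1 : x + 1 - 1 - x = 0 := by omega
    have h2 : x + 1 - x = 1 := by omega
    rw [hcm, h1, h2]
    have hxx : ((x : ℚ) + 1) - (x : ℚ) - 1 = 0 := by ring
    push_cast
    rw [hxx, mul_zero, mul_zero, zero_div, zero_add]
    rw [Nat.choose_succ_self_right]
    have hb : ((x + 1 : ℕ).factorial : ℚ) ≠ 0 := Nat.cast_ne_zero.mpr (Nat.factorial_ne_zero _)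
    have hc : ((x : ℚ) + 1 + 1) ≠ 0 := by positivity
    field_simp
    push_cast
    ring
  · -- x + 2 ≤ m
    have hx2 : x + 2 ≤ m := hlt
    have hcm' : Pm'.coeff (m - 1 - x) = bernoulli' (x + 1) * (m.choose (x + 1)) / m := by
      rw [hPm'Q]
      have h1 : m - 1 - x = (m - 1) + 1 - (x + 1) := by omega
      have h2 : (m - 1) + 1 = m := by omega
      rw [h1, faulQ_coeff (m - 1) (x + 1) (by omega)]
      rw [h2]
      congr 1
      push_cast [Nat.cast_sub (show 1 ≤ m by omega)]
      ring
    rw [hcm, hcm']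
    -- now pure arithmetic
    have e1 : ((m + 1).choose (x + 1) : ℚ) = ((m + 1).factorial : ℚ) /
        (((x + 1).factorial : ℚ) * ((m - x).factorial : ℚ)) := by
      rw [Nat.cast_choose ℚ (by omega : x + 1 ≤ m + 1),
        show m + 1 - (x + 1) = m - x from by omega]
    have e2 : (m.choose (x + 1) : ℚ) = ((m.factorial : ℚ)) /
        (((x + 1).factorial : ℚ) * ((m - 1 - x).factorial : ℚ)) := by
      rw [Nat.cast_choose ℚ (by omega : x + 1 ≤ m),
        show m - (x + 1) = m - 1 - x from by omega]
    have e3 : ((m + 1).factorial : ℚ) = ((m : ℚ) + 1) * (m.factorial : ℚ) := by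
      rw [Nat.factorial_succ]; push_cast; ring
    have e4 : ((m - x).factorial : ℚ) = ((m : ℚ) - (x : ℚ)) * ((m - 1 - x).factorial : ℚ) := by
      have h5 : m - x = (m - 1 - x) + 1 := by omega
      rw [h5, Nat.factorial_succ, Nat.cast_mul]
      have h6 : ((m - 1 - x + 1 : ℕ) : ℚ) = (m : ℚ) - (x : ℚ) := by
        push_cast [Nat.cast_sub (show x ≤ m - 1 by omega), Nat.cast_sub (show 1 ≤ m by omega)]
        ring
      rw [h6]
    have hmx : ((m : ℚ) - (x : ℚ)) ≠ 0 := by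
      have : (x : ℚ) + 2 ≤ (m : ℚ) := by exact_mod_cast hx2
      linarith
    have hm0 : (m : ℚ) ≠ 0 := by
      have : (0:ℚ) < m := by exact_mod_cast (by omega : 0 < m)
      linarith
    have hm1 : (m : ℚ) + 1 ≠ 0 := by positivity
    have hf1 : ((x + 1).factorial : ℚ) ≠ 0 := Nat.cast_ne_zero.mpr (Nat.factorial_ne_zero _)
    have hf2 : ((m - 1 - x).factorial : ℚ) ≠ 0 := Nat.cast_ne_zero.mpr (Nat.factorial_ne_zero _)
    rw [e1, e2, e3, e4]
    field_simp
    ring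
end

section
/- For all natural numbers k and n, if P ∈ ℚ[X] satisfies P.eval j = ∑_{i=1}^{j} i^k for all j ∈ ℕ, then ∑_{i=1}^{n} i^{k+1} = n · P.eval n − ∑_{i=1}^{n} P.eval (i−1), as an identity in ℚ. -/
open Finset Polynomial

theorem stmt_15 (k n : ℕ) (P : ℚ[X])
    (hP : ∀ j : ℕ, P.eval (j : ℚ) = ∑ i ∈ Icc 1 j, (i : ℚ) ^ k) :
    ∑ i ∈ Icc 1 n, (i : ℚ) ^ (k + 1) =
      (n : ℚ) * P.eval (n : ℚ) - ∑ i ∈ Icc 1 n, P.eval ((i : ℚ) - 1) := by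
  induction n with
  | zero => simp
  | succ n ih =>
    have h1 : (((n+1 : ℕ) : ℚ)) - 1 = (n : ℚ) := by push_cast; ring
    rw [Finset.sum_Icc_succ_top (by omega : 1 ≤ n+1),
        Finset.sum_Icc_succ_top (by omega : 1 ≤ n+1), ih, h1,
        hP (n+1), hP n, Finset.sum_Icc_succ_top (by omega : 1 ≤ n+1)]
    push_cast
    ring
end

section
/- For every natural number k, let P_0, P_1, …, P_{k+1} ∈ ℚ[X] be the polynomials satisfying P_j.eval n = ∑_{i=1}^{n} i^j for all n ∈ ℕ (so P_0 = X). Let Q = P_k.comp (X − 1) and let c_j denote the coefficient of X^j in Q. Then the polynomial identity (1 + c_{k+1}) · P_{k+1} = X · P_k − ∑_{j=0}^{k} c_j · P_j holds in ℚ[X]. -/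
open Finset Polynomial

/-- The Faulhaber polynomial: evaluates at `n` to `∑ i in range n, i^p`. -/
noncomputable def Fb (p : ℕ) : ℚ[X] :=
  ∑ i ∈ range (p + 1), C (_root_.bernoulli i * (p + 1).choose i / (p + 1)) * X ^ (p + 1 - i)

lemma Fb_eval (p n : ℕ) : (Fb p).eval (n : ℚ) = ∑ i ∈ range n, (i : ℚ) ^ p := by
  rw [Fb, eval_finset_sum, sum_range_pow n p]
  refine Finset.sum_congr rfl fun i _ => ?_
  simp [eval_mul, eval_pow]
  ring

lemma Fb_deg (p : ℕ) : (Fb p).natDegree ≤ p + 1 := by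
  rw [Fb]
  apply natDegree_sum_le_of_forall_le
  intro i _
  exact (natDegree_C_mul_X_pow_le _ _).trans (Nat.sub_le _ _)

noncomputable def Hb (p : ℕ) : ℚ[X] :=
  (Fb p).comp (X + 1) - C (if p = 0 then 1 else 0)

lemma Hb_eval (p n : ℕ) : (Hb p).eval (n : ℚ) = ∑ i ∈ Icc 1 n, (i : ℚ) ^ p := by
  have h1 : (Fb p).eval ((n : ℚ) + 1) = ∑ i ∈ range (n + 1), (i : ℚ) ^ p := by
    have := Fb_eval p (n + 1)
    push_cast at this
    exact this
  have h2 : ∑ i ∈ range (n + 1), (i : ℚ) ^ p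
      = (0 : ℚ) ^ p + ∑ i ∈ Icc 1 n, (i : ℚ) ^ p := by
    rw [Finset.range_eq_Ico, Finset.sum_eq_sum_Ico_succ_bot (Nat.succ_pos n),
      Nat.succ_eq_add_one, Finset.Ico_add_one_right_eq_Icc]
    norm_num
  have h3 : ((0 : ℚ) ^ p) = if p = 0 then 1 else 0 := by
    rcases Nat.eq_zero_or_pos p with h | h
    · simp [h]
    · simp [h.ne']
  simp only [Hb, eval_sub, eval_comp, eval_add, eval_X, eval_one, eval_C, h1, h2, h3]
  ring

lemma Hb_deg (p : ℕ) : (Hb p).natDegree ≤ p + 1 := by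
  refine (natDegree_sub_le _ _).trans ?_
  have hx : ((X : ℚ[X]) + 1).natDegree = 1 := by
    have h : ((X : ℚ[X]) + 1) = X + C 1 := by simp
    rw [h, natDegree_X_add_C]
  simp only [natDegree_C, natDegree_comp, hx, mul_one]
  simpa using Fb_deg p

theorem stmt_16 (k : ℕ) (P : ℕ → ℚ[X])
    (hP : ∀ j, j ≤ k + 1 → ∀ n : ℕ, (P j).eval (n : ℚ) = ∑ i ∈ Icc 1 n, (i : ℚ) ^ j) :
    (C (1 + ((P k).comp (X - 1)).coeff (k + 1))) * P (k + 1) =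
      X * P k - ∑ j ∈ range (k + 1), C (((P k).comp (X - 1)).coeff j) * P j := by
  have hinj : Function.Injective ((↑) : ℕ → ℚ) := Nat.cast_injective
  set Q : ℚ[X] := (P k).comp (X - 1) with hQdef
  -- P k equals the explicit polynomial Hb k
  have hPk : P k = Hb k := by
    apply Polynomial.eq_of_infinite_eval_eq
    apply (Set.infinite_range_of_injective hinj).mono
    rintro x ⟨n, rfl⟩
    simp only [Set.mem_setOf_eq]
    rw [hP k (by omega) n, Hb_eval]
  have hQdeg : Q.natDegree < k + 2 := by
    rw [hQdef, natDegree_comp]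
    have h1 : (X - 1 : ℚ[X]) = X - C 1 := by simp
    rw [h1, natDegree_X_sub_C, mul_one, hPk]
    have := Hb_deg k
    omega
  have hQs : ∀ x : ℚ, Q.eval x = ∑ j ∈ range (k + 2), Q.coeff j * x ^ j :=
    fun x => eval_eq_sum_range' hQdeg x
  -- the telescoping identity
  have key : ∀ n : ℕ, (n : ℚ) * (P k).eval (n : ℚ) =
      (P (k + 1)).eval (n : ℚ) + ∑ i ∈ Icc 1 n, Q.eval (i : ℚ) := by
    intro n
    induction n with
    | zero =>
      have h0 := hP (k + 1) le_rfl 0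
      simp at h0
      simp [h0]
    | succ n ih =>
      have e1 : (P k).eval ((n + 1 : ℕ) : ℚ) = (P k).eval (n : ℚ) + ((n : ℚ) + 1) ^ k := by
        rw [hP k (by omega) (n + 1), hP k (by omega) n,
          Finset.sum_Icc_succ_top (by omega)]
        push_cast; ring
      have e2 : (P (k + 1)).eval ((n + 1 : ℕ) : ℚ)
          = (P (k + 1)).eval (n : ℚ) + ((n : ℚ) + 1) ^ (k + 1) := by
        rw [hP (k + 1) le_rfl (n + 1), hP (k + 1) le_rfl n,
          Finset.sum_Icc_succ_top (by omega)]
        push_cast; ring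
      have e3 : Q.eval ((n + 1 : ℕ) : ℚ) = (P k).eval (n : ℚ) := by
        rw [hQdef, eval_comp]
        simp only [eval_sub, eval_X, eval_one]
        push_cast
        ring_nf
      rw [Finset.sum_Icc_succ_top (by omega), e3]
      push_cast
      push_cast at e1 e2 ih
      rw [e1, e2]
      linear_combination ih
  -- rewrite the Q-sum as a sum over power sums
  have W : ∀ n : ℕ, ∑ i ∈ Icc 1 n, Q.eval (i : ℚ) =
      ∑ j ∈ range (k + 2), Q.coeff j * (P j).eval (n : ℚ) := by
    intro n
    calc ∑ i ∈ Icc 1 n, Q.eval (i : ℚ)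
        = ∑ i ∈ Icc 1 n, ∑ j ∈ range (k + 2), Q.coeff j * (i : ℚ) ^ j :=
          Finset.sum_congr rfl fun i _ => hQs i
      _ = ∑ j ∈ range (k + 2), ∑ i ∈ Icc 1 n, Q.coeff j * (i : ℚ) ^ j :=
          Finset.sum_comm
      _ = ∑ j ∈ range (k + 2), Q.coeff j * (P j).eval (n : ℚ) := by
          refine Finset.sum_congr rfl fun j hj => ?_
          rw [← Finset.mul_sum, hP j (by have := mem_range.mp hj; omega) n]
  apply Polynomial.eq_of_infinite_eval_eq
  apply (Set.infinite_range_of_injective hinj).mono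
  rintro x ⟨n, rfl⟩
  simp only [Set.mem_setOf_eq, eval_mul, eval_add, eval_sub, eval_C, eval_X,
    eval_one, eval_finset_sum]
  have hkey := key n
  have hW := W n
  rw [Finset.sum_range_succ] at hW
  rw [hW] at hkey
  linarith [hkey]
end
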